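/- The holomorphic 1-form dz/z^{d+2} fails to have finite weighted L² norm on the punctured disk: ∫_{0<|z|<1} |z|^{-2(d+2)} · |z|^{2d} · (log(2+|z|^{-2d}))^{-2} dA(z) = ∞. -/

import Mathlib

open MeasureTheory Metric

private lemma aux_sq_le_pow : ∀ n : ℕ, 6 ≤ n → (n + 1) ^ 2 ≤ 2 ^ n := by
  intro n hn
  induction n, hn using Nat.le_induction with
  | base => norm_num
  | succ k hk ih =>
    have h2 : 2 ≤ k := by omega
    have h : (k + 1 + 1) ^ 2 ≤ 2 * (k + 1) ^ 2 := by nlinarith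
    calc (k + 1 + 1) ^ 2 ≤ 2 * (k + 1) ^ 2 := h
      _ ≤ 2 * 2 ^ k := by omega
      _ = 2 ^ (k + 1) := by ring

theorem stmt12 (d : ℕ) (hd : 1 ≤ d) :
    ∫⁻ z in {z : ℂ | 0 < ‖z‖ ∧ ‖z‖ < 1},
      ENNReal.ofReal (‖z‖ ^ (-2*((d:ℤ)+2)) * ‖z‖ ^ (2*(d:ℤ)) *
        ((Real.log (2 + ‖z‖ ^ (-2*(d:ℤ))))⁻¹) ^ 2) = ⊤ := by
  set I := ∫⁻ z in {z : ℂ | 0 < ‖z‖ ∧ ‖z‖ < 1},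
      ENNReal.ofReal (‖z‖ ^ (-2*((d:ℤ)+2)) * ‖z‖ ^ (2*(d:ℤ)) *
        ((Real.log (2 + ‖z‖ ^ (-2*(d:ℤ))))⁻¹) ^ 2) with hI
  have hd1 : (1:ℝ) ≤ d := by exact_mod_cast hd
  -- key annulus bound
  have key : ∀ n : ℕ, 1 ≤ n →
      ENNReal.ofReal ((2:ℝ) ^ (2*n+1) / (9 * (d:ℝ)^2 * (n+1)^2)) ≤ I := by
    intro n hn
    set b : ℝ := ((1:ℝ)/2) ^ n with hb
    set a : ℝ := ((1:ℝ)/2) ^ (n+1) with ha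
    have hb0 : 0 < b := by positivity
    have ha0 : 0 < a := by positivity
    have hab : a < b := by
      rw [ha, hb, pow_succ]
      nlinarith
    have hb1 : b ≤ 1/2 := by
      rw [hb]
      calc ((1:ℝ)/2) ^ n ≤ ((1:ℝ)/2) ^ 1 := by
            apply pow_le_pow_of_le_one (by norm_num) (by norm_num) hn
        _ = 1/2 := pow_one _
    set S : Set ℂ := ball (0:ℂ) b \ closedBall (0:ℂ) a with hS
    have hSmeas : MeasurableSet S := measurableSet_ball.diff measurableSet_closedBall
    have hSsub : S ⊆ {z : ℂ | 0 < ‖z‖ ∧ ‖z‖ < 1} := by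
      rintro z ⟨hz1, hz2⟩
      rw [mem_ball_zero_iff] at hz1
      rw [mem_closedBall_zero_iff] at hz2
      push_neg at hz2
      have h1 : ‖z‖ < 1 := lt_of_lt_of_le (by simpa using hz1) (by linarith)
      have h2 : 0 < ‖z‖ := lt_trans ha0 (by simpa using hz2)
      exact ⟨h2, h1⟩
    -- volume of S
    have hvol : volume S = ENNReal.ofReal ((b^2 - a^2) * Real.pi) := by
      rw [hS, measure_diff (closedBall_subset_ball hab) measurableSet_closedBall.nullMeasurableSet
        (by rw [Complex.volume_closedBall]; exact ENNReal.mul_ne_top (by simp) ENNReal.coe_ne_top),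
        Complex.volume_ball, Complex.volume_closedBall]
      have hpic : (NNReal.pi : ENNReal) = ENNReal.ofReal Real.pi := by
        rw [← NNReal.coe_real_pi, ENNReal.ofReal_coe_nnreal]
      rw [hpic, ← ENNReal.ofReal_pow hb0.le, ← ENNReal.ofReal_pow ha0.le,
        ← ENNReal.ofReal_mul (by positivity), ← ENNReal.ofReal_mul (by positivity),
        ← ENNReal.ofReal_sub _ (by positivity)]
      ring_nf
    -- pointwise lower bound on S
    set c : ℝ := (2:ℝ) ^ (4*n) / (9 * (d:ℝ)^2 * (n+1)^2) with hc
    have hpt : ∀ z ∈ S, ENNReal.ofReal c ≤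
        ENNReal.ofReal (‖z‖ ^ (-2*((d:ℤ)+2)) * ‖z‖ ^ (2*(d:ℤ)) *
          ((Real.log (2 + ‖z‖ ^ (-2*(d:ℤ))))⁻¹) ^ 2) := by
      rintro z ⟨hz1, hz2⟩
      rw [mem_ball_zero_iff] at hz1
      rw [mem_closedBall_zero_iff] at hz2
      push_neg at hz2
      set r : ℝ := ‖z‖ with hr
      have hrb : r < b := by simpa [hr] using hz1
      have hra : a < r := by simpa [hr] using hz2
      have hr0 : 0 < r := lt_trans ha0 hra
      apply ENNReal.ofReal_le_ofReal
      have hcomb : r ^ (-2*((d:ℤ)+2)) * r ^ (2*(d:ℤ)) = (r ^ 4)⁻¹ := by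
        rw [← zpow_add₀ hr0.ne']
        have : -2*((d:ℤ)+2) + 2*(d:ℤ) = -4 := by ring
        rw [this, zpow_neg, show (4:ℤ) = ((4:ℕ):ℤ) by norm_cast, zpow_natCast]
      rw [hcomb]
      have hzpow : r ^ (-2*(d:ℤ)) = (r ^ (2*d))⁻¹ := by
        rw [← zpow_natCast r (2*d), ← zpow_neg]
        push_cast
        ring_nf
      set L : ℝ := Real.log (2 + r ^ (-2*(d:ℤ))) with hL
      -- bounds on r powers
      have hrpow_ge : (1:ℝ) ≤ (r ^ (2*d))⁻¹ := by
        rw [le_inv_comm₀ one_pos (by positivity), inv_one]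
        calc r ^ (2*d) ≤ 1 ^ (2*d) := by
              apply pow_le_pow_left₀ hr0.le (by linarith)
          _ = 1 := one_pow _
      have hL0 : 0 < L := by
        rw [hL, hzpow]
        apply Real.log_pos
        linarith
      have hMpos : (0:ℝ) < 3 * d * (n+1) := by positivity
      have hLle : L ≤ 3 * d * (n+1) := by
        have h1 : (r ^ (2*d))⁻¹ ≤ (a ^ (2*d))⁻¹ := by
          apply inv_anti₀ (by positivity)
          exact pow_le_pow_left₀ ha0.le hra.le _
        have h2 : (a ^ (2*d))⁻¹ = (2:ℝ) ^ ((n+1)*(2*d)) := by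
          rw [ha, ← pow_mul, one_div, inv_pow, inv_inv]
        have h3 : (2:ℝ) + (r ^ (2*d))⁻¹ ≤ (2:ℝ) ^ ((n+1)*(2*d) + 1) := by
          have h4 : (2:ℝ) ≤ (2:ℝ) ^ ((n+1)*(2*d)) := by
            calc (2:ℝ) = 2 ^ 1 := (pow_one 2).symm
              _ ≤ 2 ^ ((n+1)*(2*d)) := by
                  apply pow_le_pow_right₀ (by norm_num)
                  have : 1 ≤ n + 1 := by omega
                  have : 1 ≤ 2 * d := by omega
                  calc 1 ≤ (n+1) * 1 := by omega
                    _ ≤ (n+1) * (2*d) := by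
                        apply Nat.mul_le_mul_left; omega
          rw [pow_succ]
          nlinarith [h1, h2]
        calc L ≤ Real.log ((2:ℝ) ^ ((n+1)*(2*d) + 1)) := by
              apply Real.log_le_log (by rw [hzpow]; linarith)
              rw [hzpow]; exact h3
          _ = ((n+1)*(2*d) + 1 : ℕ) * Real.log 2 := by rw [Real.log_pow]
          _ ≤ ((n+1)*(2*d) + 1 : ℕ) * 1 := by
              apply mul_le_mul_of_nonneg_left _ (by positivity)
              have := Real.log_two_lt_d9
              linarith
          _ ≤ 3 * d * (n+1) := by
              rw [mul_one]
              push_cast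
              nlinarith [hd1, (by exact_mod_cast Nat.zero_le n : (0:ℝ) ≤ n)]
      have hLsq : (L⁻¹) ^ 2 ≥ (9 * (d:ℝ)^2 * (n+1)^2)⁻¹ := by
        have h1 : L ^ 2 ≤ (3 * d * (n+1)) ^ 2 := by
          apply pow_le_pow_left₀ hL0.le hLle
        have h2 : ((3 * (d:ℝ) * (n+1)) ^ 2)⁻¹ ≤ (L ^ 2)⁻¹ := by
          apply inv_anti₀ (by positivity) h1
        calc (9 * (d:ℝ)^2 * (n+1)^2)⁻¹ = ((3 * (d:ℝ) * (n+1)) ^ 2)⁻¹ := by ring_nf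
          _ ≤ (L ^ 2)⁻¹ := h2
          _ = (L⁻¹) ^ 2 := by rw [inv_pow]
      have hr4 : (2:ℝ) ^ (4*n) ≤ (r ^ 4)⁻¹ := by
        have h1 : (r ^ 4)⁻¹ ≥ (b ^ 4)⁻¹ := by
          apply inv_anti₀ (by positivity)
          exact pow_le_pow_left₀ hr0.le hrb.le _
        have h2 : (b ^ 4)⁻¹ = (2:ℝ) ^ (4*n) := by
          rw [hb, ← pow_mul, one_div, inv_pow, inv_inv, Nat.mul_comm]
        linarith
      calc c = (2:ℝ) ^ (4*n) * (9 * (d:ℝ)^2 * (n+1)^2)⁻¹ := by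
            rw [hc]; ring
        _ ≤ (r ^ 4)⁻¹ * (L⁻¹) ^ 2 := by
            apply mul_le_mul hr4 hLsq (by positivity) (by positivity)
    -- put together
    have step : ENNReal.ofReal c * volume S ≤ I := by
      calc ENNReal.ofReal c * volume S
          = ∫⁻ _ in S, ENNReal.ofReal c := by rw [setLIntegral_const, mul_comm]
        _ ≤ ∫⁻ z in S, ENNReal.ofReal (‖z‖ ^ (-2*((d:ℤ)+2)) *
              ‖z‖ ^ (2*(d:ℤ)) *
              ((Real.log (2 + ‖z‖ ^ (-2*(d:ℤ))))⁻¹) ^ 2) :=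
            setLIntegral_mono' hSmeas hpt
        _ ≤ I := by rw [hI]; exact lintegral_mono_set hSsub
    refine le_trans ?_ step
    rw [hvol, ← ENNReal.ofReal_mul (by positivity)]
    apply ENNReal.ofReal_le_ofReal
    have hpi := Real.pi_gt_three
    have hb2 : b^2 = ((1:ℝ)/4)^n := by
      rw [hb, show ((1:ℝ)/4) = (1/2)*(1/2) by norm_num, mul_pow]; ring
    have ha2 : a^2 = ((1:ℝ)/4)^n * (1/4) := by
      rw [ha, pow_succ, show ((1:ℝ)/4) = (1/2)*(1/2) by norm_num, mul_pow]; ring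
    have hba : b^2 - a^2 = (3/4) * ((1:ℝ)/4)^n := by rw [hb2, ha2]; ring
    have h4n : ((1:ℝ)/4)^n * (2:ℝ)^(4*n) = (2:ℝ)^(2*n) := by
      rw [pow_mul, pow_mul, ← mul_pow]; norm_num
    have hden : (0:ℝ) < 9 * (d:ℝ)^2 * (n+1)^2 := by positivity
    have hnum : (2:ℝ)^(2*n+1) ≤ (2:ℝ)^(4*n) * ((b^2-a^2) * Real.pi) := by
      rw [hba]
      have e : (2:ℝ)^(4*n) * ((3/4) * ((1:ℝ)/4)^n * Real.pi) =
          (3/4) * Real.pi * ((2:ℝ)^(2*n)) := by rw [← h4n]; ring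
      rw [e]
      have h2 : (2:ℝ)^(2*n+1) = 2 * (2:ℝ)^(2*n) := by rw [pow_succ]; ring
      rw [h2]
      have hp : (0:ℝ) < (2:ℝ)^(2*n) := by positivity
      nlinarith
    rw [hc, div_mul_eq_mul_div]
    rw [div_le_div_iff₀ hden hden]
    exact mul_le_mul_of_nonneg_right hnum hden.le
  -- conclude: I is larger than every real
  by_contra htop
  clear_value I
  have hIR : I = ENNReal.ofReal I.toReal := (ENNReal.ofReal_toReal htop).symm
  obtain ⟨N, hN⟩ : ∃ x : ℝ, x = I.toReal + 1 := ⟨_, rfl⟩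
  obtain ⟨m, hm⟩ := exists_nat_ge (9 * (d:ℝ)^2 * N)
  set n : ℕ := max 6 m with hn
  have hn6 : 6 ≤ n := le_max_left _ _
  have hnm : m ≤ n := le_max_right _ _
  have h1 : (n+1)^2 ≤ 2^n := aux_sq_le_pow n hn6
  have h2 : n < 2^n := Nat.lt_two_pow_self
  have hbig : N ≤ (2:ℝ) ^ (2*n+1) / (9 * (d:ℝ)^2 * (n+1)^2) := by
    have hden : (0:ℝ) < 9 * (d:ℝ)^2 * (n+1)^2 := by positivity
    rw [le_div_iff₀ hden]
    have e1 : ((n:ℝ)+1)^2 ≤ (2:ℝ)^n := by exact_mod_cast h1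
    have e2 : 9 * (d:ℝ)^2 * N ≤ (2:ℝ)^n := by
      have h3 : (m:ℝ) ≤ (n:ℝ) := by exact_mod_cast hnm
      have h2' : (n:ℝ) < (2:ℝ)^n := by exact_mod_cast h2
      linarith
    have e3 : (2:ℝ)^(2*n+1) = 2 * ((2:ℝ)^n * (2:ℝ)^n) := by
      rw [pow_succ, two_mul, pow_add]; ring
    have hp : (0:ℝ) < (2:ℝ)^n := by positivity
    have prod : (9 * (d:ℝ)^2 * N) * (((n:ℝ)+1)^2) ≤ (2:ℝ)^n * (2:ℝ)^n :=
      mul_le_mul e2 e1 (by positivity) hp.le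
    calc N * (9 * (d:ℝ)^2 * ((n:ℝ)+1)^2)
        = (9 * (d:ℝ)^2 * N) * (((n:ℝ)+1)^2) := by ring
      _ ≤ (2:ℝ)^n * (2:ℝ)^n := prod
      _ ≤ 2 * ((2:ℝ)^n * (2:ℝ)^n) := by linarith [mul_nonneg hp.le hp.le]
      _ = (2:ℝ)^(2*n+1) := e3.symm
  have hle := le_trans (ENNReal.ofReal_le_ofReal hbig) (key n (by omega))
  have hfin : ENNReal.ofReal N ≤ ENNReal.ofReal I.toReal := by
    calc ENNReal.ofReal N ≤ I := hle
      _ = ENNReal.ofReal I.toReal := hIR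
  rw [ENNReal.ofReal_le_ofReal_iff ENNReal.toReal_nonneg] at hfin
  rw [hN] at hfin
  linarith
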